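/- Let ω₀ > 0 and let ω ∈ ℝ with |ω| ≥ ω₀. Let V : ℝ → ℝ be continuous with ∫_ℝ |V(y)| dy < ∞. Then there exists a unique bounded continuous function u : ℝ → ℂ satisfying the Volterra integral equation u(x) = e^{iωx} + ∫_{−∞}^{x} ( sin(ω(x − y)) / ω )·V(y)·u(y) dy for all x ∈ ℝ. Moreover, u is twice continuously differentiable, solves the o.d.e. u'' = (V − ω²)·u on ℝ, and satisfies u(x) − e^{iωx} → 0 as x → −∞. -/

import Mathlib

open MeasureTheory Set Complex Filter
open scoped BoundedContinuousFunction

namespace Stmt8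

noncomputable section

variable (ω : ℝ) (V : ℝ → ℝ)

/-- The weight `|V|/|ω|`. -/
def W : ℝ → ℝ := fun y => |V y| / |ω|

/-- `F x = ∫_{-∞}^x |V|/|ω|`. -/
def F : ℝ → ℝ := fun x => ∫ y in Iic x, W ω V y

/-- `M = ∫_ℝ |V|/|ω|`. -/
def M : ℝ := ∫ y, W ω V y

variable {ω V}

lemma W_cont (hVc : Continuous V) : Continuous (W ω V) := (continuous_abs.comp hVc).div_const _

lemma W_nonneg (y : ℝ) : 0 ≤ W ω V y := div_nonneg (abs_nonneg _) (abs_nonneg _)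

lemma W_int (hVi : Integrable V) : Integrable (W ω V) := hVi.abs.div_const _

lemma F_nonneg (x : ℝ) : 0 ≤ F ω V x :=
  setIntegral_nonneg measurableSet_Iic fun y _ => W_nonneg y

lemma F_le_M (hVi : Integrable V) (x : ℝ) : F ω V x ≤ M ω V :=
  setIntegral_le_integral (W_int hVi) (Filter.Eventually.of_forall fun y => W_nonneg y)

lemma M_nonneg : 0 ≤ M ω V := integral_nonneg fun y => W_nonneg y

lemma F_mono (hVi : Integrable V) {a b : ℝ} (h : a ≤ b) : F ω V a ≤ F ω V b :=
  setIntegral_mono_set (W_int hVi).integrableOn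
    (Filter.Eventually.of_forall fun y => W_nonneg y)
    (HasSubset.Subset.eventuallyLE (Iic_subset_Iic.2 h))

lemma F_repr (hVi : Integrable V) (x : ℝ) :
    F ω V x = F ω V 0 + ∫ t in (0:ℝ)..x, W ω V t := by
  have := intervalIntegral.integral_Iic_sub_Iic (f := W ω V) (μ := volume) (a := (0:ℝ)) (b := x)
    (W_int (ω := ω) hVi).integrableOn (W_int (ω := ω) hVi).integrableOn
  unfold F
  linarith

lemma F_cont (hVc : Continuous V) (hVi : Integrable V) : Continuous (F ω V) := by
  have : F ω V = fun x => F ω V 0 + ∫ t in (0:ℝ)..x, W ω V t := funext (F_repr hVi)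
  rw [this]
  exact continuous_const.add
    (intervalIntegral.continuous_primitive (fun a b => (W_int hVi).intervalIntegrable) 0)

lemma F_deriv (hVc : Continuous V) (hVi : Integrable V) (x : ℝ) :
    HasDerivAt (F ω V) (W ω V x) x := by
  have : F ω V = fun x => F ω V 0 + ∫ t in (0:ℝ)..x, W ω V t := funext (F_repr hVi)
  rw [this]
  exact (intervalIntegral.integral_hasDerivAt_right (W_int hVi).intervalIntegrable
    ((W_cont hVc).stronglyMeasurableAtFilter _ _) (W_cont hVc).continuousAt).const_add _

lemma F_tendsto_bot (hVi : Integrable V) : Tendsto (F ω V) atBot (nhds 0) := by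
  have h1 : Tendsto (fun a => ∫ t in a..(0:ℝ), W ω V t) atBot (nhds (F ω V 0)) :=
    intervalIntegral_tendsto_integral_Iic 0 (W_int hVi).integrableOn tendsto_id
  have h2 : ∀ a : ℝ, F ω V a = F ω V 0 - ∫ t in a..(0:ℝ), W ω V t := by
    intro a
    have := intervalIntegral.integral_Iic_sub_Iic (f := W ω V) (μ := volume) (a := a) (b := (0:ℝ))
      (W_int (ω := ω) hVi).integrableOn (W_int (ω := ω) hVi).integrableOn
    unfold F; linarith
  have : Tendsto (fun a => F ω V 0 - ∫ t in a..(0:ℝ), W ω V t) atBot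
      (nhds (F ω V 0 - F ω V 0)) := tendsto_const_nhds.sub h1
  rw [sub_self] at this
  exact this.congr fun a => (h2 a).symm

lemma WFpow_intOn (hVc : Continuous V) (hVi : Integrable V) (n : ℕ) (x : ℝ) :
    IntegrableOn (fun y => W ω V y * F ω V y ^ n) (Iic x) := by
  refine Integrable.mono' (g := fun y => F ω V x ^ n * W ω V y)
    (((W_int (ω := ω) hVi).const_mul (F ω V x ^ n)).integrableOn)
    (((W_cont (ω := ω) hVc).mul ((F_cont hVc hVi).pow n)).aestronglyMeasurable.restrict) ?_
  filter_upwards [ae_restrict_mem measurableSet_Iic] with y hy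
  rw [Real.norm_eq_abs, _root_.abs_of_nonneg (mul_nonneg (W_nonneg (ω := ω) (V := V) y) (pow_nonneg (F_nonneg (ω := ω) (V := V) y) n)),
    mul_comm (F ω V x ^ n)]
  exact mul_le_mul_of_nonneg_left (pow_le_pow_left₀ (F_nonneg y) (F_mono hVi hy) n) (W_nonneg y)

lemma key_int (hVc : Continuous V) (hVi : Integrable V) (n : ℕ) (x : ℝ) :
    ∫ y in Iic x, W ω V y * F ω V y ^ n = F ω V x ^ (n + 1) / (n + 1) := by
  have hd : ∀ y : ℝ, HasDerivAt (fun y => F ω V y ^ (n + 1) / (n + 1))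
      (W ω V y * F ω V y ^ n) y := by
    intro y
    have h := ((F_deriv (ω := ω) hVc hVi y).pow (n + 1)).div_const ((n : ℝ) + 1)
    refine h.congr_deriv (Eq.symm ?_)
    push_cast
    field_simp
  have h2 : ∀ a : ℝ, ∫ y in a..x, W ω V y * F ω V y ^ n
      = F ω V x ^ (n + 1) / (n + 1) - F ω V a ^ (n + 1) / (n + 1) := by
    intro a
    rw [← intervalIntegral.integral_eq_sub_of_hasDerivAt (fun y _ => hd y)
      (((W_cont hVc).mul ((F_cont hVc hVi).pow n)).intervalIntegrable _ _)]
  have h1 : Tendsto (fun a => ∫ y in a..x, W ω V y * F ω V y ^ n) atBot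
      (nhds (∫ y in Iic x, W ω V y * F ω V y ^ n)) :=
    intervalIntegral_tendsto_integral_Iic x (WFpow_intOn hVc hVi n x) tendsto_id
  have h3 : Tendsto (fun a => F ω V x ^ (n + 1) / (n + 1) - F ω V a ^ (n + 1) / (n + 1)) atBot
      (nhds (F ω V x ^ (n + 1) / (n + 1) - 0 ^ (n + 1) / (n + 1))) :=
    tendsto_const_nhds.sub (((F_tendsto_bot hVi).pow (n + 1)).div_const _)
  rw [zero_pow (Nat.succ_ne_zero n), zero_div, sub_zero] at h3
  exact tendsto_nhds_unique h1 (by simpa only [h2] using h3)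

/-! ### The complex integrand -/

lemma norm_exp_I (x : ℝ) : ‖Complex.exp (Complex.I * ω * x)‖ = 1 := by
  rw [Complex.norm_exp]
  simp

lemma norm_ker_le (hω : ω ≠ 0) (x y : ℝ) :
    ‖((Real.sin (ω * (x - y)) / ω : ℝ) : ℂ)‖ ≤ |ω|⁻¹ := by
  rw [Complex.norm_real, Real.norm_eq_abs, abs_div]
  rw [div_eq_mul_inv]
  have habs : |Real.sin (ω * (x - y))| ≤ 1 :=
    abs_le.2 ⟨Real.neg_one_le_sin _, Real.sin_le_one _⟩
  exact mul_le_of_le_one_left (by positivity) habs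

lemma integrand_bound (hω : ω ≠ 0) {u : ℝ → ℂ} {B : ℝ} (hB : ∀ y, ‖u y‖ ≤ B) (x y : ℝ) :
    ‖((Real.sin (ω * (x - y)) / ω : ℝ) : ℂ) * (V y : ℂ) * u y‖ ≤ B * W ω V y := by
  have hB0 : (0:ℝ) ≤ B := le_trans (norm_nonneg _) (hB 0)
  rw [norm_mul, norm_mul]
  calc ‖((Real.sin (ω * (x - y)) / ω : ℝ) : ℂ)‖ * ‖(V y : ℂ)‖ * ‖u y‖
      ≤ |ω|⁻¹ * |V y| * B := by
        refine mul_le_mul (mul_le_mul (norm_ker_le hω x y) (le_of_eq ?_) (norm_nonneg _)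
          (by positivity)) (hB y) (norm_nonneg _) (by positivity)
        rw [Complex.norm_real, Real.norm_eq_abs]
    _ = B * W ω V y := by unfold W; field_simp

lemma integrand_intOn (hω : ω ≠ 0) (hVc : Continuous V) (hVi : Integrable V)
    {u : ℝ → ℂ} (hu : Continuous u) {B : ℝ} (hB : ∀ y, ‖u y‖ ≤ B) (x : ℝ) :
    IntegrableOn (fun y => ((Real.sin (ω * (x - y)) / ω : ℝ) : ℂ) * (V y : ℂ) * u y) (Iic x) := by
  refine Integrable.mono' (((W_int hVi).const_mul B).integrableOn) ?_
    (Filter.Eventually.of_forall fun y => integrand_bound hω hB x y)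
  exact (((Complex.continuous_ofReal.comp ((Real.continuous_sin.comp
    (continuous_const.mul (continuous_const.sub continuous_id))).div_const ω)).mul
    (Complex.continuous_ofReal.comp hVc)).mul hu).aestronglyMeasurable.restrict

lemma Itg_norm_le (hω : ω ≠ 0) (hVc : Continuous V) (hVi : Integrable V)
    {u : ℝ → ℂ} {B : ℝ} (hB : ∀ y, ‖u y‖ ≤ B) (x : ℝ) :
    ‖∫ y in Iic x, ((Real.sin (ω * (x - y)) / ω : ℝ) : ℂ) * (V y : ℂ) * u y‖
      ≤ B * F ω V x := by
  have := norm_integral_le_of_norm_le (f := fun y =>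
      ((Real.sin (ω * (x - y)) / ω : ℝ) : ℂ) * (V y : ℂ) * u y)
    (g := fun y => B * W ω V y) (μ := volume.restrict (Iic x))
    (((W_int hVi).const_mul B).integrableOn)
    (Filter.Eventually.of_forall fun y => integrand_bound hω hB x y)
  rwa [integral_const_mul] at this

/-! ### Primitives of integrable functions -/

lemma prim_repr {f : ℝ → ℂ} (hfi : Integrable f) :
    (fun x => ∫ y in Iic x, f y)
      = fun x => (∫ y in Iic (0:ℝ), f y) + ∫ t in (0:ℝ)..x, f t := by
  funext x
  rw [← intervalIntegral.integral_Iic_sub_Iic hfi.integrableOn hfi.integrableOn]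
  ring

lemma prim_cont {f : ℝ → ℂ} (hfi : Integrable f) :
    Continuous fun x => ∫ y in Iic x, f y := by
  rw [prim_repr hfi]
  exact continuous_const.add
    (intervalIntegral.continuous_primitive (fun a b => hfi.intervalIntegrable) 0)

lemma prim_deriv {f : ℝ → ℂ} (hfc : Continuous f) (hfi : Integrable f) (x : ℝ) :
    HasDerivAt (fun x => ∫ y in Iic x, f y) (f x) x := by
  rw [prim_repr hfi]
  exact (intervalIntegral.integral_hasDerivAt_right hfi.intervalIntegrable
    (hfc.stronglyMeasurableAtFilter _ _) hfc.continuousAt).const_add _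

lemma trig_mul_int (hVc : Continuous V) (hVi : Integrable V)
    {u : ℝ → ℂ} (hu : Continuous u) {B : ℝ} (hB : ∀ y, ‖u y‖ ≤ B)
    {g : ℝ → ℝ} (hgc : Continuous g) (hg1 : ∀ t, |g t| ≤ 1) :
    Integrable (fun y => ((g y : ℝ) : ℂ) * ((V y : ℂ) * u y)) := by
  have hB0 : (0:ℝ) ≤ B := le_trans (norm_nonneg _) (hB 0)
  refine Integrable.mono' (hVi.abs.const_mul B)
    ((Complex.continuous_ofReal.comp hgc).mul
      ((Complex.continuous_ofReal.comp hVc).mul hu)).aestronglyMeasurable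
    (Filter.Eventually.of_forall fun y => ?_)
  rw [norm_mul, norm_mul, Complex.norm_real, Complex.norm_real, Real.norm_eq_abs,
    Real.norm_eq_abs]
  calc |g y| * (|V y| * ‖u y‖) ≤ 1 * (|V y| * B) := by
        exact mul_le_mul (hg1 y) (mul_le_mul_of_nonneg_left (hB y) (abs_nonneg _))
          (by positivity) zero_le_one
    _ = B * |V y| := by ring

lemma Itg_eq (hVc : Continuous V) (hVi : Integrable V)
    {u : ℝ → ℂ} (hu : Continuous u) {B : ℝ} (hB : ∀ y, ‖u y‖ ≤ B) (x : ℝ) :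
    ∫ y in Iic x, ((Real.sin (ω * (x - y)) / ω : ℝ) : ℂ) * (V y : ℂ) * u y
      = ((Real.sin (ω * x) / ω : ℝ) : ℂ)
          * (∫ y in Iic x, ((Real.cos (ω * y) : ℝ) : ℂ) * ((V y : ℂ) * u y))
        - ((Real.cos (ω * x) / ω : ℝ) : ℂ)
          * (∫ y in Iic x, ((Real.sin (ω * y) : ℝ) : ℂ) * ((V y : ℂ) * u y)) := by
  have hc := trig_mul_int hVc hVi hu hB (g := fun t => Real.cos (ω * t))
    (Real.continuous_cos.comp (continuous_const.mul continuous_id))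
    (fun t => abs_le.2 ⟨Real.neg_one_le_cos _, Real.cos_le_one _⟩)
  have hs := trig_mul_int hVc hVi hu hB (g := fun t => Real.sin (ω * t))
    (Real.continuous_sin.comp (continuous_const.mul continuous_id))
    (fun t => abs_le.2 ⟨Real.neg_one_le_sin _, Real.sin_le_one _⟩)
  rw [← integral_const_mul, ← integral_const_mul,
    ← integral_sub ((hc.integrableOn).const_mul _) ((hs.integrableOn).const_mul _)]
  refine setIntegral_congr_fun measurableSet_Iic fun y _ => ?_
  have hsin : Real.sin (ω * (x - y))
      = Real.sin (ω * x) * Real.cos (ω * y) - Real.cos (ω * x) * Real.sin (ω * y) := by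
    rw [mul_sub]; exact Real.sin_sub _ _
  rw [hsin]
  push_cast
  ring

lemma Itg_cont (hVc : Continuous V) (hVi : Integrable V)
    {u : ℝ → ℂ} (hu : Continuous u) {B : ℝ} (hB : ∀ y, ‖u y‖ ≤ B) :
    Continuous fun x => ∫ y in Iic x,
      ((Real.sin (ω * (x - y)) / ω : ℝ) : ℂ) * (V y : ℂ) * u y := by
  have h : (fun x => ∫ y in Iic x, ((Real.sin (ω * (x - y)) / ω : ℝ) : ℂ) * (V y : ℂ) * u y)
      = fun x => ((Real.sin (ω * x) / ω : ℝ) : ℂ)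
          * (∫ y in Iic x, ((Real.cos (ω * y) : ℝ) : ℂ) * ((V y : ℂ) * u y))
        - ((Real.cos (ω * x) / ω : ℝ) : ℂ)
          * (∫ y in Iic x, ((Real.sin (ω * y) : ℝ) : ℂ) * ((V y : ℂ) * u y)) :=
    funext (Itg_eq hVc hVi hu hB)
  rw [h]
  have hc := trig_mul_int hVc hVi hu hB (g := fun t => Real.cos (ω * t))
    (Real.continuous_cos.comp (continuous_const.mul continuous_id))
    (fun t => abs_le.2 ⟨Real.neg_one_le_cos _, Real.cos_le_one _⟩)
  have hs := trig_mul_int hVc hVi hu hB (g := fun t => Real.sin (ω * t))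
    (Real.continuous_sin.comp (continuous_const.mul continuous_id))
    (fun t => abs_le.2 ⟨Real.neg_one_le_sin _, Real.sin_le_one _⟩)
  refine Continuous.sub (Continuous.mul ?_ (prim_cont hc)) (Continuous.mul ?_ (prim_cont hs))
  · exact Complex.continuous_ofReal.comp
      ((Real.continuous_sin.comp (continuous_const.mul continuous_id)).div_const ω)
  · exact Complex.continuous_ofReal.comp
      ((Real.continuous_cos.comp (continuous_const.mul continuous_id)).div_const ω)

/-! ### The Volterra map on bounded continuous functions -/

variable (ω V) in
def T (hω : ω ≠ 0) (hVc : Continuous V) (hVi : Integrable V) :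
    (ℝ →ᵇ ℂ) → (ℝ →ᵇ ℂ) := fun u =>
  BoundedContinuousFunction.ofNormedAddCommGroup
    (fun x => Complex.exp (Complex.I * ω * x)
      + ∫ y in Iic x, ((Real.sin (ω * (x - y)) / ω : ℝ) : ℂ) * (V y : ℂ) * u y)
    (((continuous_const.mul Complex.continuous_ofReal).cexp).add
      (Itg_cont hVc hVi u.continuous fun y => u.norm_coe_le_norm y))
    (1 + ‖u‖ * M ω V)
    (by
      intro x
      refine le_trans (norm_add_le _ _) ?_
      rw [norm_exp_I]
      refine add_le_add_right ?_ 1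
      refine le_trans (Itg_norm_le hω hVc hVi (fun y => u.norm_coe_le_norm y) x) ?_
      exact mul_le_mul_of_nonneg_left (F_le_M hVi x) (norm_nonneg u))

lemma T_apply (hω : ω ≠ 0) (hVc : Continuous V) (hVi : Integrable V) (u : ℝ →ᵇ ℂ) (x : ℝ) :
    T ω V hω hVc hVi u x = Complex.exp (Complex.I * ω * x)
      + ∫ y in Iic x, ((Real.sin (ω * (x - y)) / ω : ℝ) : ℂ) * (V y : ℂ) * u y := rfl

lemma iter_bound (hω : ω ≠ 0) (hVc : Continuous V) (hVi : Integrable V)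
    (u v : ℝ →ᵇ ℂ) (n : ℕ) :
    ∀ x : ℝ, ‖(T ω V hω hVc hVi)^[n] u x - (T ω V hω hVc hVi)^[n] v x‖
      ≤ dist u v * F ω V x ^ n / n.factorial := by
  induction n with
  | zero =>
    intro x
    simpa [dist_eq_norm] using
      (BoundedContinuousFunction.dist_coe_le_dist (f := u) (g := v) x)
  | succ n ih =>
    intro x
    rw [Function.iterate_succ_apply', Function.iterate_succ_apply']
    set a := (T ω V hω hVc hVi)^[n] u with ha
    set b := (T ω V hω hVc hVi)^[n] v with hb
    have hIa := integrand_intOn hω hVc hVi a.continuous (fun y => a.norm_coe_le_norm y) x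
    have hIb := integrand_intOn hω hVc hVi b.continuous (fun y => b.norm_coe_le_norm y) x
    rw [T_apply, T_apply, add_sub_add_left_eq_sub, ← integral_sub hIa hIb]
    have hn1 : ((n.factorial : ℝ)) ≠ 0 := Nat.cast_ne_zero.2 n.factorial_ne_zero
    have hptw : ∀ y : ℝ, ‖((Real.sin (ω * (x - y)) / ω : ℝ) : ℂ) * (V y : ℂ) * a y
        - ((Real.sin (ω * (x - y)) / ω : ℝ) : ℂ) * (V y : ℂ) * b y‖
        ≤ dist u v / n.factorial * (W ω V y * F ω V y ^ n) := by
      intro y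
      have hker : ‖((Real.sin (ω * (x - y)) / ω : ℝ) : ℂ) * (V y : ℂ)‖ ≤ W ω V y := by
        rw [norm_mul]
        have h1 := norm_ker_le hω x y
        have h2 : ‖(V y : ℂ)‖ = |V y| := by rw [Complex.norm_real, Real.norm_eq_abs]
        rw [h2]
        calc ‖((Real.sin (ω * (x - y)) / ω : ℝ) : ℂ)‖ * |V y| ≤ |ω|⁻¹ * |V y| :=
              mul_le_mul_of_nonneg_right h1 (abs_nonneg _)
          _ = W ω V y := by unfold W; rw [div_eq_mul_inv, mul_comm]
      have h3 : ‖((Real.sin (ω * (x - y)) / ω : ℝ) : ℂ) * (V y : ℂ) * a y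
          - ((Real.sin (ω * (x - y)) / ω : ℝ) : ℂ) * (V y : ℂ) * b y‖
          ≤ W ω V y * (dist u v * F ω V y ^ n / n.factorial) := by
        rw [← mul_sub, norm_mul]
        exact mul_le_mul hker (ih y) (norm_nonneg _) (W_nonneg y)
      exact le_trans h3 (le_of_eq (by ring))
    have hbd := norm_integral_le_of_norm_le
      (g := fun y => dist u v / n.factorial * (W ω V y * F ω V y ^ n))
      (μ := volume.restrict (Iic x))
      (((WFpow_intOn hVc hVi n x).const_mul _))
      (Filter.Eventually.of_forall hptw)
    rw [integral_const_mul, key_int hVc hVi n x] at hbd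
    refine le_trans hbd (le_of_eq ?_)
    have hn2 : ((n : ℝ) + 1) ≠ 0 := by positivity
    rw [Nat.factorial_succ]
    push_cast
    rw [div_mul_div_comm, mul_comm ((n.factorial : ℝ)) ((n : ℝ) + 1)]

lemma dist_iter_le (hω : ω ≠ 0) (hVc : Continuous V) (hVi : Integrable V) (n : ℕ)
    (u v : ℝ →ᵇ ℂ) :
    dist ((T ω V hω hVc hVi)^[n] u) ((T ω V hω hVc hVi)^[n] v)
      ≤ M ω V ^ n / n.factorial * dist u v := by
  have h0 : (0:ℝ) ≤ M ω V ^ n / n.factorial * dist u v :=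
    mul_nonneg (div_nonneg (pow_nonneg (M_nonneg (ω := ω) (V := V)) n) (by positivity))
      dist_nonneg
  refine (BoundedContinuousFunction.dist_le h0).2 fun x => ?_
  rw [dist_eq_norm]
  refine le_trans (iter_bound hω hVc hVi u v n x) ?_
  rw [mul_comm (M ω V ^ n / (n.factorial : ℝ)) (dist u v), ← mul_div_assoc]
  gcongr
  · exact F_nonneg x
  · exact F_le_M hVi x

end

end Stmt8

theorem stmt8 (ω₀ ω : ℝ) (hω₀ : 0 < ω₀) (hω : ω₀ ≤ |ω|)
    (V : ℝ → ℝ) (hVc : Continuous V) (hVi : Integrable V) :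
    ∃ u : ℝ → ℂ,
      (Continuous u ∧ (∃ B : ℝ, ∀ x : ℝ, ‖u x‖ ≤ B) ∧
        ∀ x : ℝ, u x = Complex.exp (Complex.I * ω * x)
          + ∫ y in Iic x, ((Real.sin (ω * (x - y)) / ω : ℝ) : ℂ) * V y * u y) ∧
      (∀ v : ℝ → ℂ,
        (Continuous v ∧ (∃ B : ℝ, ∀ x : ℝ, ‖v x‖ ≤ B) ∧
          ∀ x : ℝ, v x = Complex.exp (Complex.I * ω * x)
            + ∫ y in Iic x, ((Real.sin (ω * (x - y)) / ω : ℝ) : ℂ) * V y * v y) →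
        v = u) ∧
      ContDiff ℝ 2 u ∧
      (∀ x : ℝ, deriv (deriv u) x = ((V x : ℂ) - (ω : ℂ) ^ 2) * u x) ∧
      Tendsto (fun x : ℝ => u x - Complex.exp (Complex.I * ω * x)) atBot (nhds 0) := by
  classical
  have hω0 : ω ≠ 0 := by
    intro h
    rw [h, abs_zero] at hω
    linarith
  set Tm := Stmt8.T ω V hω0 hVc hVi with hTm
  -- a contracting iterate
  have htend := FloorSemiring.tendsto_pow_div_factorial_atTop (K := ℝ) (Stmt8.M ω V)
  obtain ⟨n, hn⟩ := (htend.eventually (gt_mem_nhds one_pos)).exists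
  have hMn : (0:ℝ) ≤ Stmt8.M ω V ^ n / n.factorial :=
    div_nonneg (pow_nonneg (Stmt8.M_nonneg (ω := ω) (V := V)) n) (Nat.cast_nonneg _)
  set Kc : NNReal := Real.toNNReal (Stmt8.M ω V ^ n / n.factorial) with hKc
  have hKco : (Kc : ℝ) = Stmt8.M ω V ^ n / n.factorial := Real.coe_toNNReal _ hMn
  have hKlip : LipschitzWith Kc (Tm^[n]) := by
    refine LipschitzWith.of_dist_le_mul fun u v => ?_
    rw [hKco]
    exact Stmt8.dist_iter_le hω0 hVc hVi n u v
  have hClt : Kc < 1 := by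
    have : (Kc : ℝ) < 1 := by rw [hKco]; exact hn
    exact_mod_cast this
  have hC : ContractingWith Kc (Tm^[n]) := ⟨hClt, hKlip⟩
  set ub : ℝ →ᵇ ℂ := hC.fixedPoint (Tm^[n]) with hub
  have hfix : Function.IsFixedPt Tm ub := hC.isFixedPt_fixedPoint_iterate
  have hubd : ∀ y : ℝ, ‖ub y‖ ≤ ‖ub‖ := fun y => ub.norm_coe_le_norm y
  have hVolt : ∀ x : ℝ, ub x = Complex.exp (Complex.I * ω * x)
      + ∫ y in Iic x, ((Real.sin (ω * (x - y)) / ω : ℝ) : ℂ) * V y * ub y := by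
    intro x
    have h1 : Tm ub x = ub x := congrArg (fun f : ℝ →ᵇ ℂ => f x) hfix
    rw [← h1, hTm, Stmt8.T_apply]
  -- helper functions for the calculus part
  set fV : ℝ → ℂ := fun y => (V y : ℂ) * ub y with hfV
  have hfVc : Continuous fV := (Complex.continuous_ofReal.comp hVc).mul ub.continuous
  have hcosi : Integrable (fun y => ((Real.cos (ω * y) : ℝ) : ℂ) * fV y) :=
    Stmt8.trig_mul_int hVc hVi ub.continuous hubd (g := fun t => Real.cos (ω * t))
      (Real.continuous_cos.comp (continuous_const.mul continuous_id))
      (fun t => abs_le.2 ⟨Real.neg_one_le_cos _, Real.cos_le_one _⟩)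
  have hsini : Integrable (fun y => ((Real.sin (ω * y) : ℝ) : ℂ) * fV y) :=
    Stmt8.trig_mul_int hVc hVi ub.continuous hubd (g := fun t => Real.sin (ω * t))
      (Real.continuous_sin.comp (continuous_const.mul continuous_id))
      (fun t => abs_le.2 ⟨Real.neg_one_le_sin _, Real.sin_le_one _⟩)
  set PA : ℝ → ℂ := fun x => ∫ y in Iic x, ((Real.cos (ω * y) : ℝ) : ℂ) * fV y with hPA
  set PB : ℝ → ℂ := fun x => ∫ y in Iic x, ((Real.sin (ω * y) : ℝ) : ℂ) * fV y with hPB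
  have hPAd : ∀ x : ℝ, HasDerivAt PA (((Real.cos (ω * x) : ℝ) : ℂ) * fV x) x := fun x =>
    Stmt8.prim_deriv ((Complex.continuous_ofReal.comp
      (Real.continuous_cos.comp (continuous_const.mul continuous_id))).mul hfVc) hcosi x
  have hPBd : ∀ x : ℝ, HasDerivAt PB (((Real.sin (ω * x) : ℝ) : ℂ) * fV x) x := fun x =>
    Stmt8.prim_deriv ((Complex.continuous_ofReal.comp
      (Real.continuous_sin.comp (continuous_const.mul continuous_id))).mul hfVc) hsini x
  have hrepr : ∀ x : ℝ, ub x = Complex.exp (Complex.I * ω * x)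
      + ((Real.sin (ω * x) / ω : ℝ) : ℂ) * PA x - ((Real.cos (ω * x) / ω : ℝ) : ℂ) * PB x := by
    intro x
    rw [hVolt x, Stmt8.Itg_eq hVc hVi ub.continuous hubd x]
    ring
  -- derivatives of the coefficient functions
  have hlin : ∀ x : ℝ, HasDerivAt (fun x : ℝ => ω * x) ω x := fun x => by
    simpa using (hasDerivAt_id x).const_mul ω
  have hsd : ∀ x : ℝ, HasDerivAt (fun x : ℝ => Real.sin (ω * x) / ω) (Real.cos (ω * x)) x := by
    intro x
    have h3 := ((Real.hasDerivAt_sin (ω * x)).comp x (hlin x)).div_const ω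
    refine h3.congr_deriv (Eq.symm ?_)
    field_simp
  have hcd : ∀ x : ℝ, HasDerivAt (fun x : ℝ => Real.cos (ω * x) / ω) (-Real.sin (ω * x)) x := by
    intro x
    have h3 := ((Real.hasDerivAt_cos (ω * x)).comp x (hlin x)).div_const ω
    refine h3.congr_deriv (Eq.symm ?_)
    field_simp
  have hsd2 : ∀ x : ℝ, HasDerivAt (fun x : ℝ => Real.sin (ω * x)) (Real.cos (ω * x) * ω) x :=
    fun x => (Real.hasDerivAt_sin (ω * x)).comp x (hlin x)
  have hcd2 : ∀ x : ℝ, HasDerivAt (fun x : ℝ => Real.cos (ω * x)) (-Real.sin (ω * x) * ω) x :=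
    fun x => (Real.hasDerivAt_cos (ω * x)).comp x (hlin x)
  have hexp : ∀ x : ℝ, HasDerivAt (fun x : ℝ => Complex.exp (Complex.I * ω * x))
      (Complex.I * ω * Complex.exp (Complex.I * ω * x)) x := by
    intro x
    have h1 : HasDerivAt (fun x : ℝ => Complex.I * ω * (x : ℂ)) (Complex.I * ω) x := by
      simpa using (Complex.ofRealCLM.hasDerivAt (x := x)).const_mul (Complex.I * ω)
    have h2 := h1.cexp
    convert h2 using 1
    ring
  set u' : ℝ → ℂ := fun x : ℝ => Complex.I * ω * Complex.exp (Complex.I * ω * x)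
    + ((Real.cos (ω * x) : ℝ) : ℂ) * PA x + ((Real.sin (ω * x) : ℝ) : ℂ) * PB x with hu'def
  have hu' : ∀ x : ℝ, HasDerivAt (⇑ub) (u' x) x := by
    intro x
    have h := ((hexp x).add (((hsd x).ofReal_comp.mul (hPAd x)))).sub
      ((hcd x).ofReal_comp.mul (hPBd x))
    have hfun : ⇑ub = fun x : ℝ => Complex.exp (Complex.I * ω * x)
        + ((Real.sin (ω * x) / ω : ℝ) : ℂ) * PA x
        - ((Real.cos (ω * x) / ω : ℝ) : ℂ) * PB x := funext hrepr
    rw [hfun]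
    refine h.congr_deriv (Eq.symm ?_)
    simp only [hu'def, hfV]
    push_cast
    ring
  have hu'' : ∀ x : ℝ, HasDerivAt u' (((V x : ℂ) - (ω : ℂ) ^ 2) * ub x) x := by
    intro x
    have h := (((hexp x).const_mul (Complex.I * ω)).add
      ((hcd2 x).ofReal_comp.mul (hPAd x))).add ((hsd2 x).ofReal_comp.mul (hPBd x))
    rw [hu'def]
    refine h.congr_deriv (Eq.symm ?_)
    have hx := hrepr x
    have hpy : Complex.cos ((ω : ℂ) * (x : ℂ)) ^ 2 + Complex.sin ((ω : ℂ) * (x : ℂ)) ^ 2 = 1 :=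
      Complex.cos_sq_add_sin_sq _
    have hI : Complex.I ^ 2 = -1 := Complex.I_sq
    have hωc : (ω : ℂ) ≠ 0 := Complex.ofReal_ne_zero.2 hω0
    rw [hfV]
    push_cast at hx ⊢
    have hx' : (ω : ℂ) * ub x = (ω : ℂ) * Complex.exp (Complex.I * ω * x)
        + Complex.sin ((ω : ℂ) * (x : ℂ)) * PA x
        - Complex.cos ((ω : ℂ) * (x : ℂ)) * PB x := by
      rw [hx]; field_simp
    linear_combination (-(ω:ℂ)) * hx'
      + (-((V x : ℂ)) * ub x) * hpy
      + (-(ω:ℂ)^2 * Complex.exp (Complex.I * ω * x)) * hI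
  have hderiv_u : deriv (⇑ub) = u' := funext fun x => (hu' x).deriv
  refine ⟨⇑ub, ⟨ub.continuous, ⟨‖ub‖, fun x => by
      exact hubd x⟩, hVolt⟩, ?_, ?_, ?_, ?_⟩
  · -- uniqueness
    rintro v ⟨hvc, ⟨B, hvB⟩, hveq⟩
    have hvB' : ∀ x, ‖v x‖ ≤ B := fun x => by exact hvB x
    set vb : ℝ →ᵇ ℂ := BoundedContinuousFunction.ofNormedAddCommGroup v hvc B hvB' with hvb
    have hvfix : Function.IsFixedPt Tm vb := by
      apply BoundedContinuousFunction.ext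
      intro x
      rw [hTm, Stmt8.T_apply]
      exact (hveq x).symm
    have : vb = ub :=
      hC.fixedPoint_unique' (hvfix.iterate n) hC.fixedPoint_isFixedPt
    calc v = ⇑vb := rfl
      _ = ⇑ub := congrArg _ this
  · -- C²
    have h1 : ContDiff ℝ 1 (deriv (⇑ub)) := by
      rw [hderiv_u]
      refine contDiff_one_iff_deriv.mpr ⟨fun x => (hu'' x).differentiableAt, ?_⟩
      have : deriv u' = fun x => ((V x : ℂ) - (ω : ℂ) ^ 2) * ub x :=
        funext fun x => (hu'' x).deriv
      rw [this]
      exact ((Complex.continuous_ofReal.comp hVc).sub continuous_const).mul ub.continuous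
    have h2 : Differentiable ℝ (⇑ub) := fun x => (hu' x).differentiableAt
    rw [show (2 : WithTop ℕ∞) = 1 + 1 from rfl]
    exact contDiff_succ_iff_deriv.mpr ⟨h2, by simp, h1⟩
  · -- the ODE
    intro x
    rw [hderiv_u]
    exact (hu'' x).deriv
  · -- asymptotics at -∞
    rw [tendsto_zero_iff_norm_tendsto_zero]
    have hb : ∀ x : ℝ, ‖ub x - Complex.exp (Complex.I * ω * x)‖ ≤ ‖ub‖ * Stmt8.F ω V x := by
      intro x
      rw [hVolt x, add_sub_cancel_left]
      exact Stmt8.Itg_norm_le hω0 hVc hVi hubd x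
    refine squeeze_zero (fun x => norm_nonneg _) hb ?_
    simpa using ((Stmt8.F_tendsto_bot (ω := ω) hVi).const_mul ‖ub‖)
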